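/- Suppose G is a Lehman graph of type (n,3,s) with k = 3s - n ∈ {1,-1}, where s > 2 if k = 1 and s > 1 if k = -1, and G contains a 3-rung ladder segment L. Then the 3-rung ladder reduction G↓L, obtained by deleting the six vertices of L and adding the edges (b_L, w_R) and (b_R, w_L), is a Lehman graph of type (n-3, 3, s-1). -/

import Mathlib

open Matrix BigOperators

/-- A (0,1)-matrix: every entry is 0 or 1. -/
def is01 {m n : Type*} (A : Matrix m n ℤ) : Prop := ∀ i j, A i j = 0 ∨ A i j = 1

set_option maxHeartbeats 1600000

set_option linter.unusedSectionVars false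

section Aux

variable {α : Type*} [Fintype α] [DecidableEq α]

lemma stmt13_triple_sum (g : α → ℤ) (j₁ j₂ j₃ : α)
    (h12 : j₁ ≠ j₂) (h13 : j₁ ≠ j₃) (h23 : j₂ ≠ j₃) :
    ∑ x ∈ ({j₁, j₂, j₃} : Finset α), g x = g j₁ + g j₂ + g j₃ := by
  rw [Finset.sum_insert (by simp [h12, h13]), Finset.sum_insert (by simp [h23]),
    Finset.sum_singleton, add_assoc]

lemma stmt13_sum3_rest (f : α → ℤ)
    (h01 : ∀ j, f j = 0 ∨ f j = 1) (hsum : ∑ j, f j = 3)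
    (j₁ j₂ j₃ : α) (h12 : j₁ ≠ j₂) (h13 : j₁ ≠ j₃) (h23 : j₂ ≠ j₃)
    (e1 : f j₁ = 1) (e2 : f j₂ = 1) (e3 : f j₃ = 1) :
    ∀ j, j ≠ j₁ → j ≠ j₂ → j ≠ j₃ → f j = 0 := by
  intro j hj1 hj2 hj3
  have hsub : ({j₁, j₂, j₃} : Finset α) ⊆ Finset.univ := Finset.subset_univ _
  have htriple : ∑ x ∈ ({j₁, j₂, j₃} : Finset α), f x = 3 := by
    rw [stmt13_triple_sum f j₁ j₂ j₃ h12 h13 h23, e1, e2, e3]; norm_num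
  have hsdiff := Finset.sum_sdiff (f := f) hsub
  have hzero : ∑ x ∈ Finset.univ \ ({j₁, j₂, j₃} : Finset α), f x = 0 := by
    omega
  have := (Finset.sum_eq_zero_iff_of_nonneg (by
    intro i _
    rcases h01 i with h | h <;> rw [h] <;> norm_num)).1 hzero j
    (by simp [hj1, hj2, hj3])
  exact this

lemma stmt13_sum3_mul (f : α → ℤ)
    (h01 : ∀ j, f j = 0 ∨ f j = 1) (hsum : ∑ j, f j = 3)
    (j₁ j₂ j₃ : α) (h12 : j₁ ≠ j₂) (h13 : j₁ ≠ j₃) (h23 : j₂ ≠ j₃)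
    (e1 : f j₁ = 1) (e2 : f j₂ = 1) (e3 : f j₃ = 1) (g : α → ℤ) :
    ∑ j, f j * g j = g j₁ + g j₂ + g j₃ := by
  have hrest := stmt13_sum3_rest f h01 hsum j₁ j₂ j₃ h12 h13 h23 e1 e2 e3
  rw [← Finset.sum_subset (Finset.subset_univ ({j₁, j₂, j₃} : Finset α))
    (fun x _ hx => by
      have hx' : x ≠ j₁ ∧ x ≠ j₂ ∧ x ≠ j₃ := by
        constructor
        · intro h; exact hx (by simp [h])
        constructor
        · intro h; exact hx (by simp [h])
        · intro h; exact hx (by simp [h])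
      rw [hrest x hx'.1 hx'.2.1 hx'.2.2, zero_mul])]
  rw [stmt13_triple_sum (fun j => f j * g j) j₁ j₂ j₃ h12 h13 h23]
  rw [e1, e2, e3]; ring

lemma stmt13_sum3_mul' (f : α → ℤ)
    (h01 : ∀ j, f j = 0 ∨ f j = 1) (hsum : ∑ j, f j = 3)
    (j₁ j₂ j₃ : α) (h12 : j₁ ≠ j₂) (h13 : j₁ ≠ j₃) (h23 : j₂ ≠ j₃)
    (e1 : f j₁ = 1) (e2 : f j₂ = 1) (e3 : f j₃ = 1) (g : α → ℤ) :
    ∑ j, g j * f j = g j₁ + g j₂ + g j₃ := by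
  rw [show (∑ j, g j * f j) = ∑ j, f j * g j from
    Finset.sum_congr rfl fun j _ => mul_comm _ _]
  exact stmt13_sum3_mul f h01 hsum j₁ j₂ j₃ h12 h13 h23 e1 e2 e3 g

end Aux


lemma stmt13_btA {V W : Type*} [Fintype V] [Fintype W] [DecidableEq V] [DecidableEq W]
    (A B : Matrix V W ℤ) (k : ℤ) (hk0 : k ≠ 0)
    (hcard : Fintype.card V = Fintype.card W)
    (hnk : (Fintype.card V : ℤ) + k ≠ 0)
    (hArow : ∀ u, ∑ w, A u w = 3) (hAcol : ∀ w, ∑ u, A u w = 3)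
    (hAB : ∀ u v, ∑ w, A u w * B v w = 1 + (if u = v then k else 0)) :
    ∀ w w', ∑ v, B v w * A v w' = 1 + (if w = w' then k else 0) := by
  classical
  set Aq : Matrix V W ℚ := fun u w => (A u w : ℚ) with hAqdef
  set Bq : Matrix V W ℚ := fun u w => (B u w : ℚ) with hBqdef
  have hABq : ∀ u v, ∑ w, Aq u w * Bq v w = 1 + (if u = v then (k : ℚ) else 0) := by
    intro u v
    simp only [hAqdef, hBqdef]
    by_cases huv : u = v
    · have h := hAB u v
      rw [if_pos huv] at h
      rw [if_pos huv]
      exact_mod_cast h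
    · have h := hAB u v
      rw [if_neg huv] at h
      rw [if_neg huv]
      exact_mod_cast h
  have hArowq : ∀ u, ∑ w, Aq u w = 3 := by
    intro u
    simp only [hAqdef]
    have h := congrArg (fun z : ℤ => (z : ℚ)) (hArow u)
    push_cast at h
    exact h
  have hAcolq : ∀ w, ∑ u, Aq u w = 3 := by
    intro w
    simp only [hAqdef]
    have h := congrArg (fun z : ℤ => (z : ℚ)) (hAcol w)
    push_cast at h
    exact h
  have hkq : (k : ℚ) ≠ 0 := Int.cast_ne_zero.mpr hk0
  have hnkq : (Fintype.card V : ℚ) + (k : ℚ) ≠ 0 := by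
    intro h
    apply hnk
    have : ((Fintype.card V : ℤ) + k : ℤ) = ((0 : ℤ)) := by exact_mod_cast h
    exact this
  -- vecMul injectivity
  have hinj : ∀ x : V → ℚ, (∀ w, ∑ v, x v * Aq v w = 0) → x = 0 := by
    intro x hx
    set S := ∑ v, x v with hS
    have key : ∀ v', S + (k : ℚ) * x v' = 0 := by
      intro v'
      have h0 : ∑ w, (∑ v, x v * Aq v w) * Bq v' w = 0 := by
        apply Finset.sum_eq_zero; intro w _; rw [hx w, zero_mul]
      have h1 : ∑ w, (∑ v, x v * Aq v w) * Bq v' w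
          = ∑ v, x v * (1 + if v = v' then (k : ℚ) else 0) := by
        calc ∑ w, (∑ v, x v * Aq v w) * Bq v' w
            = ∑ w, ∑ v, x v * Aq v w * Bq v' w := by
              apply Finset.sum_congr rfl; intro w _; rw [Finset.sum_mul]
          _ = ∑ v, ∑ w, x v * Aq v w * Bq v' w := Finset.sum_comm
          _ = ∑ v, x v * ∑ w, Aq v w * Bq v' w := by
              apply Finset.sum_congr rfl; intro v _
              rw [Finset.mul_sum]
              apply Finset.sum_congr rfl; intro w _; ring
          _ = ∑ v, x v * (1 + if v = v' then (k : ℚ) else 0) := by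
              apply Finset.sum_congr rfl; intro v _; rw [hABq v v']
      have h2 : ∑ v, x v * (1 + if v = v' then (k : ℚ) else 0)
          = S + (k : ℚ) * x v' := by
        have : ∀ v, x v * (1 + if v = v' then (k : ℚ) else 0)
            = x v + (if v = v' then x v * k else 0) := by
          intro v; split <;> ring
        rw [Finset.sum_congr rfl fun v _ => this v, Finset.sum_add_distrib,
          Finset.sum_ite_eq' Finset.univ v' (fun v => x v * k)]
        simp [hS, mul_comm]
      rw [h1, h2] at h0
      exact h0
    have hsumkey : (Fintype.card V : ℚ) * S + (k : ℚ) * S = 0 := by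
      have h0 : ∑ v' : V, (S + (k : ℚ) * x v') = 0 :=
        Finset.sum_eq_zero fun v' _ => key v'
      rw [Finset.sum_add_distrib, Finset.sum_const, ← Finset.mul_sum] at h0
      simpa [Finset.card_univ, nsmul_eq_mul, hS] using h0
    have hS0 : S = 0 := by
      have : S * ((Fintype.card V : ℚ) + k) = 0 := by ring_nf; ring_nf at hsumkey; linarith
      rcases mul_eq_zero.1 this with h | h
      · exact h
      · exact absurd h hnkq
    funext v
    have := key v
    rw [hS0, zero_add] at this
    have := mul_eq_zero.1 this
    rcases this with h | h
    · exact absurd h hkq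
    · exact h
  -- mulVec injectivity via surjectivity
  have hker : ∀ y : W → ℚ, (∀ u, ∑ w, Aq u w * y w = 0) → y = 0 := by
    intro y hy
    have hLinj : Function.Injective (Matrix.vecMulLinear Aq) := by
      rw [injective_iff_map_eq_zero]
      intro x hx0
      apply hinj
      intro w
      have := congrFun hx0 w
      simpa [Matrix.vecMulLinear_apply, Matrix.vecMul, dotProduct] using this
    have hfr : Module.finrank ℚ (V → ℚ) = Module.finrank ℚ (W → ℚ) := by
      rw [Module.finrank_pi, Module.finrank_pi, hcard]
    have hLsurj : Function.Surjective (Matrix.vecMulLinear Aq) :=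
      (LinearMap.injective_iff_surjective_of_finrank_eq_finrank hfr).1 hLinj
    obtain ⟨x, hxy⟩ := hLsurj y
    have hxy' : ∀ w, ∑ v, x v * Aq v w = y w := by
      intro w
      have := congrFun hxy w
      simpa [Matrix.vecMulLinear_apply, Matrix.vecMul, dotProduct] using this
    have hyy : ∑ w, y w * y w = 0 := by
      calc ∑ w, y w * y w = ∑ w, (∑ v, x v * Aq v w) * y w := by
            apply Finset.sum_congr rfl; intro w _; rw [hxy' w]
        _ = ∑ w, ∑ v, x v * Aq v w * y w := by
            apply Finset.sum_congr rfl; intro w _; rw [Finset.sum_mul]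
        _ = ∑ v, ∑ w, x v * Aq v w * y w := Finset.sum_comm
        _ = ∑ v, x v * ∑ w, Aq v w * y w := by
            apply Finset.sum_congr rfl; intro v _
            rw [Finset.mul_sum]
            apply Finset.sum_congr rfl; intro w _; ring
        _ = 0 := by
            apply Finset.sum_eq_zero; intro v _; rw [hy v, mul_zero]
    funext w
    have := (Finset.sum_eq_zero_iff_of_nonneg
      (fun w _ => mul_self_nonneg (y w))).1 hyy w (Finset.mem_univ w)
    exact mul_self_eq_zero.1 this
  -- conclude
  intro w w'
  have hCq : (∑ v, Bq v w * Aq v w') - (1 + if w = w' then (k : ℚ) else 0) = 0 := by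
    set y : W → ℚ :=
      fun ww => (∑ v, Bq v ww * Aq v w') - (1 + if ww = w' then (k : ℚ) else 0) with hydef
    have h0 : ∀ u, ∑ ww, Aq u ww * y ww = 0 := by
      intro u
      have expand : ∑ ww, Aq u ww * y ww
          = (∑ ww, Aq u ww * (∑ v, Bq v ww * Aq v w'))
            - (∑ ww, Aq u ww * (1 + if ww = w' then (k : ℚ) else 0)) := by
        rw [← Finset.sum_sub_distrib]
        apply Finset.sum_congr rfl; intro ww _
        rw [hydef]; ring
      have hT2 : ∑ ww, Aq u ww * (1 + if ww = w' then (k : ℚ) else 0)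
          = 3 + (k : ℚ) * Aq u w' := by
        have : ∀ ww, Aq u ww * (1 + if ww = w' then (k : ℚ) else 0)
            = Aq u ww + (if ww = w' then Aq u ww * k else 0) := by
          intro ww; split <;> ring
        rw [Finset.sum_congr rfl fun ww _ => this ww, Finset.sum_add_distrib,
          Finset.sum_ite_eq' Finset.univ w' (fun ww => Aq u ww * k), hArowq u]
        simp [mul_comm]
      have hT1 : ∑ ww, Aq u ww * (∑ v, Bq v ww * Aq v w')
          = 3 + (k : ℚ) * Aq u w' := by
        calc ∑ ww, Aq u ww * (∑ v, Bq v ww * Aq v w')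
            = ∑ ww, ∑ v, Aq u ww * Bq v ww * Aq v w' := by
              apply Finset.sum_congr rfl; intro ww _
              rw [Finset.mul_sum]
              apply Finset.sum_congr rfl; intro v _; ring
          _ = ∑ v, ∑ ww, Aq u ww * Bq v ww * Aq v w' := Finset.sum_comm
          _ = ∑ v, (1 + if u = v then (k : ℚ) else 0) * Aq v w' := by
              apply Finset.sum_congr rfl; intro v _
              rw [← Finset.sum_mul, hABq u v]
          _ = 3 + (k : ℚ) * Aq u w' := by
              have : ∀ v, (1 + if u = v then (k : ℚ) else 0) * Aq v w'
                  = Aq v w' + (if u = v then k * Aq v w' else 0) := by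
                intro v; split <;> ring
              rw [Finset.sum_congr rfl fun v _ => this v, Finset.sum_add_distrib,
                Finset.sum_ite_eq Finset.univ u (fun v => (k : ℚ) * Aq v w'), hAcolq w']
              simp
      rw [expand, hT1, hT2]; ring
    have hy0 := hker y h0
    have := congrFun hy0 w
    simpa [hydef] using this
  have hfin : ((∑ v, B v w * A v w' : ℤ) : ℚ)
      = ((1 + if w = w' then k else 0 : ℤ) : ℚ) := by
    push_cast
    simp only [hAqdef, hBqdef] at hCq
    split_ifs at hCq ⊢ <;> linarith [hCq]
  exact_mod_cast hfin

/-- The 3-rung ladder reduction G↓L of a Lehman graph of type (n,3,s) with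
k = 3s - n ∈ {1,-1} (s > 2 if k = 1, s > 1 if k = -1) is a Lehman graph of
type (n-3, 3, s-1). -/
theorem stmt13 {V W : Type*} [Fintype V] [Fintype W] [DecidableEq V] [DecidableEq W]
    (n s : ℕ) (hcardV : Fintype.card V = n) (hcardW : Fintype.card W = n)
    (A : Matrix V W ℤ) (hA : is01 A)
    (hArow : ∀ b, ∑ w, A b w = 3) (hAcol : ∀ w, ∑ b, A b w = 3)
    (B : Matrix V W ℤ) (hB : is01 B)
    (hBrow : ∀ b, ∑ w, B b w = s) (hBcol : ∀ w, ∑ b, B b w = s)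
    (k : ℤ) (hk : k = 3 * s - n) (hk1 : k = 1 ∨ k = -1)
    (hs1 : k = 1 → 2 < s) (hs2 : k = -1 → 1 < s)
    (hAB : A * Bᵀ = Matrix.of (fun _ _ => (1 : ℤ)) + k • 1)
    -- the 3-rung ladder segment L
    (b₀ b₁ b₂ : V) (w₀ w₁ w₂ : W)
    (hb01 : b₀ ≠ b₁) (hb02 : b₀ ≠ b₂) (hb12 : b₁ ≠ b₂)
    (hw01 : w₀ ≠ w₁) (hw02 : w₀ ≠ w₂) (hw12 : w₁ ≠ w₂)
    (h00 : A b₀ w₀ = 1) (h11 : A b₁ w₁ = 1) (h22 : A b₂ w₂ = 1)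
    (h01 : A b₀ w₁ = 1) (h10 : A b₁ w₀ = 1) (h12 : A b₁ w₂ = 1) (h21 : A b₂ w₁ = 1)
    (h02 : A b₀ w₂ = 0) (h20 : A b₂ w₀ = 0)
    -- the attachment vertices
    (bL : V) (hbL : bL ∉ ({b₀, b₁, b₂} : Set V)) (hbLe : A bL w₀ = 1)
    (wL : W) (hwL : wL ∉ ({w₀, w₁, w₂} : Set W)) (hwLe : A b₀ wL = 1)
    (bR : V) (hbR : bR ∉ ({b₀, b₁, b₂} : Set V)) (hbRe : A bR w₂ = 1)
    (wR : W) (hwR : wR ∉ ({w₀, w₁, w₂} : Set W)) (hwRe : A b₂ wR = 1)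
    -- the bipartite adjacency matrix of G↓L: delete the six ladder vertices and add
    -- the edges (b_L, w_R) and (b_R, w_L)
    (A' : Matrix {v : V // v ≠ b₀ ∧ v ≠ b₁ ∧ v ≠ b₂} {w : W // w ≠ w₀ ∧ w ≠ w₁ ∧ w ≠ w₂} ℤ)
    (hA' : ∀ b w, A' b w =
      if (b.1 = bL ∧ w.1 = wR) ∨ (b.1 = bR ∧ w.1 = wL) then 1 else A b.1 w.1) :
    is01 A' ∧
    (∀ b, ∑ w, A' b w = 3) ∧ (∀ w, ∑ b, A' b w = 3) ∧
    Fintype.card {v : V // v ≠ b₀ ∧ v ≠ b₁ ∧ v ≠ b₂} = n - 3 ∧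
    ∃ B' : Matrix {v : V // v ≠ b₀ ∧ v ≠ b₁ ∧ v ≠ b₂}
        {w : W // w ≠ w₀ ∧ w ≠ w₁ ∧ w ≠ w₂} ℤ,
      is01 B' ∧
      (∀ b, ∑ w, B' b w = (s : ℤ) - 1) ∧ (∀ w, ∑ b, B' b w = (s : ℤ) - 1) ∧
      A' * B'ᵀ = Matrix.of (fun _ _ => (1 : ℤ)) + k • 1 := by
  have hA : ∀ i j, A i j = 0 ∨ A i j = 1 := hA
  have hB : ∀ i j, B i j = 0 ∨ B i j = 1 := hB
  show _ ∧ _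

  classical
  simp only [Set.mem_insert_iff, Set.mem_singleton_iff] at hbL hbR hwL hwR
  push_neg at hbL hbR hwL hwR
  obtain ⟨hbL0, hbL1, hbL2⟩ := hbL
  obtain ⟨hbR0, hbR1, hbR2⟩ := hbR
  obtain ⟨hwL0, hwL1, hwL2⟩ := hwL
  obtain ⟨hwR0, hwR1, hwR2⟩ := hwR
  have hA0 : ∀ v w, (0 : ℤ) ≤ A v w := fun v w => by
    rcases hA v w with h | h <;> rw [h] <;> norm_num
  have hB0 : ∀ v w, (0 : ℤ) ≤ B v w := fun v w => by
    rcases hB v w with h | h <;> rw [h] <;> norm_num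
  have habs : ∀ u v, ∑ w, A u w * B v w = 1 + (if u = v then k else 0) := by
    intro u v
    have h := congrFun (congrFun hAB u) v
    simpa only [Matrix.mul_apply, Matrix.transpose_apply, Matrix.add_apply, Matrix.of_apply,
      Matrix.smul_apply, Matrix.one_apply, smul_eq_mul, mul_ite, mul_one, mul_zero] using h
  have hsint : (2 : ℤ) ≤ (s : ℤ) := by
    have : 2 ≤ s := by
      rcases hk1 with h | h
      · exact le_of_lt (hs1 h)
      · exact hs2 h
    exact_mod_cast this
  have hk0 : k ≠ 0 := by rcases hk1 with h | h <;> omega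
  have hnk : (Fintype.card V : ℤ) + k ≠ 0 := by
    have hcv : ((Fintype.card V : ℤ)) = (n : ℤ) := by exact_mod_cast hcardV
    rw [hcv]; omega
  have hba := stmt13_btA A B k hk0 (by rw [hcardV, hcardW]) hnk hArow hAcol habs
  -- support facts for rows and columns of A
  have rA0 : ∀ w, w ≠ w₀ → w ≠ w₁ → w ≠ wL → A b₀ w = 0 :=
    stmt13_sum3_rest (A b₀) (hA b₀) (hArow b₀) w₀ w₁ wL hw01 (Ne.symm hwL0) (Ne.symm hwL1)
      h00 h01 hwLe
  have rA1 : ∀ w, w ≠ w₀ → w ≠ w₁ → w ≠ w₂ → A b₁ w = 0 :=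
    stmt13_sum3_rest (A b₁) (hA b₁) (hArow b₁) w₀ w₁ w₂ hw01 hw02 hw12 h10 h11 h12
  have rA2 : ∀ w, w ≠ w₁ → w ≠ w₂ → w ≠ wR → A b₂ w = 0 :=
    stmt13_sum3_rest (A b₂) (hA b₂) (hArow b₂) w₁ w₂ wR hw12 (Ne.symm hwR1) (Ne.symm hwR2)
      h21 h22 hwRe
  have cA0 : ∀ v, v ≠ b₀ → v ≠ b₁ → v ≠ bL → A v w₀ = 0 :=
    stmt13_sum3_rest (fun v => A v w₀) (fun v => hA v w₀) (hAcol w₀) b₀ b₁ bL hb01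
      (Ne.symm hbL0) (Ne.symm hbL1) h00 h10 hbLe
  have cA1 : ∀ v, v ≠ b₀ → v ≠ b₁ → v ≠ b₂ → A v w₁ = 0 :=
    stmt13_sum3_rest (fun v => A v w₁) (fun v => hA v w₁) (hAcol w₁) b₀ b₁ b₂ hb01 hb02 hb12
      h01 h11 h21
  have cA2 : ∀ v, v ≠ b₁ → v ≠ b₂ → v ≠ bR → A v w₂ = 0 :=
    stmt13_sum3_rest (fun v => A v w₂) (fun v => hA v w₂) (hAcol w₂) b₁ b₂ bR hb12
      (Ne.symm hbR1) (Ne.symm hbR2) h12 h22 hbRe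
  -- row equations
  have E0 : ∀ v, B v w₀ + B v w₁ + B v wL = 1 + (if b₀ = v then k else 0) := by
    intro v
    have h := habs b₀ v
    rwa [stmt13_sum3_mul (A b₀) (hA b₀) (hArow b₀) w₀ w₁ wL hw01 (Ne.symm hwL0)
      (Ne.symm hwL1) h00 h01 hwLe (fun w => B v w)] at h
  have E1 : ∀ v, B v w₀ + B v w₁ + B v w₂ = 1 + (if b₁ = v then k else 0) := by
    intro v
    have h := habs b₁ v
    rwa [stmt13_sum3_mul (A b₁) (hA b₁) (hArow b₁) w₀ w₁ w₂ hw01 hw02 hw12 h10 h11 h12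
      (fun w => B v w)] at h
  have E2 : ∀ v, B v w₁ + B v w₂ + B v wR = 1 + (if b₂ = v then k else 0) := by
    intro v
    have h := habs b₂ v
    rwa [stmt13_sum3_mul (A b₂) (hA b₂) (hArow b₂) w₁ w₂ wR hw12 (Ne.symm hwR1)
      (Ne.symm hwR2) h21 h22 hwRe (fun w => B v w)] at h
  -- column equations
  have F0 : ∀ w, B b₀ w + B b₁ w + B bL w = 1 + (if w = w₀ then k else 0) := by
    intro w
    have h := hba w w₀
    rwa [stmt13_sum3_mul' (fun v => A v w₀) (fun v => hA v w₀) (hAcol w₀) b₀ b₁ bL hb01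
      (Ne.symm hbL0) (Ne.symm hbL1) h00 h10 hbLe (fun v => B v w)] at h
  have F1 : ∀ w, B b₀ w + B b₁ w + B b₂ w = 1 + (if w = w₁ then k else 0) := by
    intro w
    have h := hba w w₁
    rwa [stmt13_sum3_mul' (fun v => A v w₁) (fun v => hA v w₁) (hAcol w₁) b₀ b₁ b₂ hb01 hb02
      hb12 h01 h11 h21 (fun v => B v w)] at h
  have F2 : ∀ w, B b₁ w + B b₂ w + B bR w = 1 + (if w = w₂ then k else 0) := by
    intro w
    have h := hba w w₂
    rwa [stmt13_sum3_mul' (fun v => A v w₂) (fun v => hA v w₂) (hAcol w₂) b₁ b₂ bR hb12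
      (Ne.symm hbR1) (Ne.symm hbR2) h12 h22 hbRe (fun v => B v w)] at h
  -- P1 : bL ≠ bR
  have hbLbR : bL ≠ bR := by
    intro hLR
    have hz : ∀ w, w ≠ w₀ → w ≠ w₁ → w ≠ w₂ → B b₂ w = 0 := by
      intro w hx0 hx1 hx2
      have e0 := F0 w; have e1 := F1 w; have e2 := F2 w
      rw [if_neg hx0] at e0; rw [if_neg hx1] at e1; rw [if_neg hx2, ← hLR] at e2
      have q0 := hB b₀ w; have q1 := hB b₁ w; have q2 := hB b₂ w; have q3 := hB bL w
      omega
    have hrest : ∑ w ∈ Finset.univ \ ({w₀, w₁, w₂} : Finset W), B b₂ w = 0 :=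
      Finset.sum_eq_zero (fun w hw => by
        simp only [Finset.mem_sdiff, Finset.mem_univ, true_and, Finset.mem_insert,
          Finset.mem_singleton] at hw
        push_neg at hw
        exact hz w hw.1 hw.2.1 hw.2.2)
    have hsd := Finset.sum_sdiff (f := B b₂) (Finset.subset_univ ({w₀, w₁, w₂} : Finset W))
    have htr := stmt13_triple_sum (B b₂) w₀ w₁ w₂ hw01 hw02 hw12
    have hsum : (s : ℤ) = B b₂ w₀ + B b₂ w₁ + B b₂ w₂ := by
      have := hBrow b₂; omega
    have e00 := F0 w₀; have e10 := F1 w₀; have e20 := F2 w₀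
    rw [if_pos rfl] at e00
    rw [if_neg hw01] at e10
    rw [if_neg hw02, ← hLR] at e20
    have e01 := F0 w₁; have e11 := F1 w₁; have e21 := F2 w₁
    rw [if_neg (Ne.symm hw01)] at e01
    rw [if_pos rfl] at e11
    rw [if_neg hw12, ← hLR] at e21
    have e02 := F0 w₂; have e12 := F1 w₂; have e22 := F2 w₂
    rw [if_neg (Ne.symm hw02)] at e02
    rw [if_neg (Ne.symm hw12)] at e12
    rw [if_pos rfl, ← hLR] at e22
    have q1 := hB b₀ w₀; have q2 := hB b₁ w₀; have q3 := hB b₂ w₀; have q4 := hB bL w₀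
    have q5 := hB b₀ w₁; have q6 := hB b₁ w₁; have q7 := hB b₂ w₁; have q8 := hB bL w₁
    have q9 := hB b₀ w₂; have q10 := hB b₁ w₂; have q11 := hB b₂ w₂; have q12 := hB bL w₂
    rcases hk1 with hkv | hkv
    · have hs := hs1 hkv; omega
    · have hs := hs2 hkv; omega
  -- P2 : wL ≠ wR
  have hwLwR : wL ≠ wR := by
    intro hLR
    have E2' : ∀ v, B v w₁ + B v w₂ + B v wL = 1 + (if b₂ = v then k else 0) := by
      intro v; rw [hLR]; exact E2 v
    have hz : ∀ v, v ≠ b₀ → v ≠ b₁ → v ≠ b₂ → B v w₂ = 0 := by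
      intro v hx0 hx1 hx2
      have e0 := E0 v; have e1 := E1 v; have e2 := E2' v
      rw [if_neg (fun h => hx0 h.symm)] at e0
      rw [if_neg (fun h => hx1 h.symm)] at e1
      rw [if_neg (fun h => hx2 h.symm)] at e2
      have q0 := hB v w₀; have q1 := hB v w₁; have q2 := hB v w₂; have q3 := hB v wL
      omega
    have hrest : ∑ v ∈ Finset.univ \ ({b₀, b₁, b₂} : Finset V), B v w₂ = 0 :=
      Finset.sum_eq_zero (fun v hv => by
        simp only [Finset.mem_sdiff, Finset.mem_univ, true_and, Finset.mem_insert,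
          Finset.mem_singleton] at hv
        push_neg at hv
        exact hz v hv.1 hv.2.1 hv.2.2)
    have hsd : (∑ v ∈ Finset.univ \ ({b₀, b₁, b₂} : Finset V), B v w₂)
        + ∑ v ∈ ({b₀, b₁, b₂} : Finset V), B v w₂ = ∑ v, B v w₂ :=
      Finset.sum_sdiff (Finset.subset_univ _)
    have htr : ∑ v ∈ ({b₀, b₁, b₂} : Finset V), B v w₂ = B b₀ w₂ + B b₁ w₂ + B b₂ w₂ :=
      stmt13_triple_sum (fun v => B v w₂) b₀ b₁ b₂ hb01 hb02 hb12
    have hsum : (s : ℤ) = B b₀ w₂ + B b₁ w₂ + B b₂ w₂ := by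
      have := hBcol w₂; omega
    have e00 := E0 b₀; have e10 := E1 b₀; have e20 := E2' b₀
    rw [if_pos rfl] at e00
    rw [if_neg (Ne.symm hb01)] at e10
    rw [if_neg (Ne.symm hb02)] at e20
    have e01 := E0 b₁; have e11 := E1 b₁; have e21 := E2' b₁
    rw [if_neg hb01] at e01
    rw [if_pos rfl] at e11
    rw [if_neg (Ne.symm hb12)] at e21
    have e02 := E0 b₂; have e12 := E1 b₂; have e22 := E2' b₂
    rw [if_neg hb02] at e02
    rw [if_neg hb12] at e12
    rw [if_pos rfl] at e22
    have q1 := hB b₀ w₀; have q2 := hB b₀ w₁; have q3 := hB b₀ w₂; have q4 := hB b₀ wL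
    have q5 := hB b₁ w₀; have q6 := hB b₁ w₁; have q7 := hB b₁ w₂; have q8 := hB b₁ wL
    have q9 := hB b₂ w₀; have q10 := hB b₂ w₁; have q11 := hB b₂ w₂; have q12 := hB b₂ wL
    rcases hk1 with hkv | hkv
    · have hs := hs1 hkv; omega
    · have hs := hs2 hkv; omega
  -- P3 : A bL wR = 0
  have hALR : A bL wR = 0 := by
    by_contra hcon
    have ht : A bL wR = 1 := by
      rcases hA bL wR with h' | h'
      · exact absurd h' hcon
      · exact h'
    have pair : ∀ w, B b₂ w + B bL w ≤ 1 + (if w = wR then k else 0) := by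
      intro w
      have h := hba w wR
      have hpair : ∑ v ∈ ({b₂, bL} : Finset V), B v w * A v wR
          = B b₂ w * A b₂ wR + B bL w * A bL wR := by
        rw [Finset.sum_insert (by simp [Ne.symm hbL2]), Finset.sum_singleton]
      have hle : ∑ v ∈ ({b₂, bL} : Finset V), B v w * A v wR ≤ ∑ v, B v w * A v wR :=
        Finset.sum_le_sum_of_subset_of_nonneg (Finset.subset_univ _)
          (fun v _ _ => mul_nonneg (hB0 v w) (hA0 v wR))
      rw [hpair, hwRe, ht, mul_one, mul_one, h] at hle
      exact hle
    have hz : ∀ w, w ≠ w₀ → w ≠ w₁ → w ≠ wR → B b₂ w = 0 := by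
      intro w hx0 hx1 hxR
      have e0 := F0 w; have e1 := F1 w; have p := pair w
      rw [if_neg hx0] at e0; rw [if_neg hx1] at e1; rw [if_neg hxR] at p
      have q0 := hB b₀ w; have q1 := hB b₁ w; have q2 := hB b₂ w; have q3 := hB bL w
      omega
    have hrest : ∑ w ∈ Finset.univ \ ({w₀, w₁, wR} : Finset W), B b₂ w = 0 :=
      Finset.sum_eq_zero (fun w hw => by
        simp only [Finset.mem_sdiff, Finset.mem_univ, true_and, Finset.mem_insert,
          Finset.mem_singleton] at hw
        push_neg at hw
        exact hz w hw.1 hw.2.1 hw.2.2)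
    have hsd := Finset.sum_sdiff (f := B b₂) (Finset.subset_univ ({w₀, w₁, wR} : Finset W))
    have htr := stmt13_triple_sum (B b₂) w₀ w₁ wR hw01 (Ne.symm hwR0) (Ne.symm hwR1)
    have hsum : (s : ℤ) = B b₂ w₀ + B b₂ w₁ + B b₂ wR := by
      have := hBrow b₂; omega
    have e00 := F0 w₀; have e10 := F1 w₀; have p0 := pair w₀
    rw [if_pos rfl] at e00
    rw [if_neg hw01] at e10
    rw [if_neg hwR0.symm] at p0
    have e01 := F0 w₁; have e11 := F1 w₁; have p1 := pair w₁
    rw [if_neg (Ne.symm hw01)] at e01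
    rw [if_pos rfl] at e11
    rw [if_neg hwR1.symm] at p1
    have e0R := F0 wR; have e1R := F1 wR; have pR := pair wR
    rw [if_neg hwR0] at e0R
    rw [if_neg hwR1] at e1R
    rw [if_pos rfl] at pR
    have q1 := hB b₀ w₀; have q2 := hB b₁ w₀; have q3 := hB b₂ w₀; have q4 := hB bL w₀
    have q5 := hB b₀ w₁; have q6 := hB b₁ w₁; have q7 := hB b₂ w₁; have q8 := hB bL w₁
    have q9 := hB b₀ wR; have q10 := hB b₁ wR; have q11 := hB b₂ wR; have q12 := hB bL wR
    rcases hk1 with hkv | hkv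
    · have hs := hs1 hkv; omega
    · have hs := hs2 hkv; omega
  -- P4 : A bR wL = 0
  have hARL : A bR wL = 0 := by
    by_contra hcon
    have ht : A bR wL = 1 := by
      rcases hA bR wL with h' | h'
      · exact absurd h' hcon
      · exact h'
    have pair : ∀ w, B b₀ w + B bR w ≤ 1 + (if w = wL then k else 0) := by
      intro w
      have h := hba w wL
      have hpair : ∑ v ∈ ({b₀, bR} : Finset V), B v w * A v wL
          = B b₀ w * A b₀ wL + B bR w * A bR wL := by
        rw [Finset.sum_insert (by simp [hbR0.symm]), Finset.sum_singleton]
      have hle : ∑ v ∈ ({b₀, bR} : Finset V), B v w * A v wL ≤ ∑ v, B v w * A v wL :=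
        Finset.sum_le_sum_of_subset_of_nonneg (Finset.subset_univ _)
          (fun v _ _ => mul_nonneg (hB0 v w) (hA0 v wL))
      rw [hpair, hwLe, ht, mul_one, mul_one, h] at hle
      exact hle
    have hz : ∀ w, w ≠ w₁ → w ≠ w₂ → w ≠ wL → B b₀ w = 0 := by
      intro w hx1 hx2 hxL
      have e1 := F1 w; have e2 := F2 w; have p := pair w
      rw [if_neg hx1] at e1; rw [if_neg hx2] at e2; rw [if_neg hxL] at p
      have q0 := hB b₀ w; have q1 := hB b₁ w; have q2 := hB b₂ w; have q3 := hB bR w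
      omega
    have hrest : ∑ w ∈ Finset.univ \ ({w₁, w₂, wL} : Finset W), B b₀ w = 0 :=
      Finset.sum_eq_zero (fun w hw => by
        simp only [Finset.mem_sdiff, Finset.mem_univ, true_and, Finset.mem_insert,
          Finset.mem_singleton] at hw
        push_neg at hw
        exact hz w hw.1 hw.2.1 hw.2.2)
    have hsd := Finset.sum_sdiff (f := B b₀) (Finset.subset_univ ({w₁, w₂, wL} : Finset W))
    have htr := stmt13_triple_sum (B b₀) w₁ w₂ wL hw12 (Ne.symm hwL1) (Ne.symm hwL2)
    have hsum : (s : ℤ) = B b₀ w₁ + B b₀ w₂ + B b₀ wL := by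
      have := hBrow b₀; omega
    have e11 := F1 w₁; have e21 := F2 w₁; have p1 := pair w₁
    rw [if_pos rfl] at e11
    rw [if_neg hw12] at e21
    rw [if_neg hwL1.symm] at p1
    have e12 := F1 w₂; have e22 := F2 w₂; have p2 := pair w₂
    rw [if_neg (Ne.symm hw12)] at e12
    rw [if_pos rfl] at e22
    rw [if_neg hwL2.symm] at p2
    have e1L := F1 wL; have e2L := F2 wL; have pL := pair wL
    rw [if_neg hwL1] at e1L
    rw [if_neg hwL2] at e2L
    rw [if_pos rfl] at pL
    have q1 := hB b₀ w₁; have q2 := hB b₁ w₁; have q3 := hB b₂ w₁; have q4 := hB bR w₁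
    have q5 := hB b₀ w₂; have q6 := hB b₁ w₂; have q7 := hB b₂ w₂; have q8 := hB bR w₂
    have q9 := hB b₀ wL; have q10 := hB b₁ wL; have q11 := hB b₂ wL; have q12 := hB bR wL
    rcases hk1 with hkv | hkv
    · have hs := hs1 hkv; omega
    · have hs := hs2 hkv; omega
  -- Key identities
  have Key1 : ∀ v, v ≠ b₁ → v ≠ b₂ → B v w₀ = B v wR := by
    intro v hx1 hx2
    have e1 := E1 v; have e2 := E2 v
    rw [if_neg (fun h => hx1 h.symm)] at e1
    rw [if_neg (fun h => hx2 h.symm)] at e2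
    omega
  have Key2 : ∀ v, v ≠ b₀ → v ≠ b₁ → B v w₂ = B v wL := by
    intro v hx0 hx1
    have e0 := E0 v; have e1 := E1 v
    rw [if_neg (fun h => hx0 h.symm)] at e0
    rw [if_neg (fun h => hx1 h.symm)] at e1
    omega
  -- subtype sums
  have hsubW : ∀ g : W → ℤ, (∑ w : {w : W // w ≠ w₀ ∧ w ≠ w₁ ∧ w ≠ w₂}, g w.1)
      = (∑ w, g w) - (g w₀ + g w₁ + g w₂) := by
    intro g
    have h1 : ∑ w ∈ Finset.univ \ ({w₀, w₁, w₂} : Finset W), g w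
        = ∑ w : {w : W // w ≠ w₀ ∧ w ≠ w₁ ∧ w ≠ w₂}, g w.1 :=
      Finset.sum_subtype _ (fun x => by
        simp only [Finset.mem_sdiff, Finset.mem_univ, true_and, Finset.mem_insert,
          Finset.mem_singleton]
        tauto) g
    have h2 := Finset.sum_sdiff (f := g) (Finset.subset_univ ({w₀, w₁, w₂} : Finset W))
    have h3 := stmt13_triple_sum g w₀ w₁ w₂ hw01 hw02 hw12
    omega
  have hsubV : ∀ g : V → ℤ, (∑ v : {v : V // v ≠ b₀ ∧ v ≠ b₁ ∧ v ≠ b₂}, g v.1)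
      = (∑ v, g v) - (g b₀ + g b₁ + g b₂) := by
    intro g
    have h1 : ∑ v ∈ Finset.univ \ ({b₀, b₁, b₂} : Finset V), g v
        = ∑ v : {v : V // v ≠ b₀ ∧ v ≠ b₁ ∧ v ≠ b₂}, g v.1 :=
      Finset.sum_subtype _ (fun x => by
        simp only [Finset.mem_sdiff, Finset.mem_univ, true_and, Finset.mem_insert,
          Finset.mem_singleton]
        tauto) g
    have h2 := Finset.sum_sdiff (f := g) (Finset.subset_univ ({b₀, b₁, b₂} : Finset V))
    have h3 := stmt13_triple_sum g b₀ b₁ b₂ hb01 hb02 hb12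
    omega
  -- ite sums over subtypes
  have hiteW : ∀ (c : W), c ≠ w₀ → c ≠ w₁ → c ≠ w₂ → ∀ f : W → ℤ,
      (∑ w : {w : W // w ≠ w₀ ∧ w ≠ w₁ ∧ w ≠ w₂}, (if w.1 = c then f w.1 else 0)) = f c := by
    intro c hc0 hc1 hc2 f
    have h1 : (∑ w : {w : W // w ≠ w₀ ∧ w ≠ w₁ ∧ w ≠ w₂}, (if w.1 = c then f w.1 else 0))
        = (∑ w, if w = c then f w else 0)
          - ((if w₀ = c then f w₀ else 0) + (if w₁ = c then f w₁ else 0)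
            + (if w₂ = c then f w₂ else 0)) := hsubW (fun w => if w = c then f w else 0)
    have h2 : (∑ w, if w = c then f w else 0) = if c ∈ Finset.univ then f c else 0 :=
      Finset.sum_ite_eq' _ _ _
    rw [h1, h2, if_pos (Finset.mem_univ c), if_neg (fun h : w₀ = c => hc0 h.symm),
      if_neg (fun h : w₁ = c => hc1 h.symm), if_neg (fun h : w₂ = c => hc2 h.symm)]
    ring
  have hiteV : ∀ (c : V), c ≠ b₀ → c ≠ b₁ → c ≠ b₂ → ∀ f : V → ℤ,
      (∑ v : {v : V // v ≠ b₀ ∧ v ≠ b₁ ∧ v ≠ b₂}, (if v.1 = c then f v.1 else 0)) = f c := by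
    intro c hc0 hc1 hc2 f
    have h1 : (∑ v : {v : V // v ≠ b₀ ∧ v ≠ b₁ ∧ v ≠ b₂}, (if v.1 = c then f v.1 else 0))
        = (∑ v, if v = c then f v else 0)
          - ((if b₀ = c then f b₀ else 0) + (if b₁ = c then f b₁ else 0)
            + (if b₂ = c then f b₂ else 0)) := hsubV (fun v => if v = c then f v else 0)
    have h2 : (∑ v, if v = c then f v else 0) = if c ∈ Finset.univ then f c else 0 :=
      Finset.sum_ite_eq' _ _ _
    rw [h1, h2, if_pos (Finset.mem_univ c), if_neg (fun h : b₀ = c => hc0 h.symm),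
      if_neg (fun h : b₁ = c => hc1 h.symm), if_neg (fun h : b₂ = c => hc2 h.symm)]
    ring
  -- cardinality
  have hcard3 : Fintype.card {v : V // v ≠ b₀ ∧ v ≠ b₁ ∧ v ≠ b₂} = n - 3 := by
    rw [Fintype.card_subtype]
    have heq : Finset.univ.filter (fun v : V => v ≠ b₀ ∧ v ≠ b₁ ∧ v ≠ b₂)
        = Finset.univ \ ({b₀, b₁, b₂} : Finset V) := by
      ext v
      simp only [Finset.mem_filter, Finset.mem_univ, true_and, Finset.mem_sdiff,
        Finset.mem_insert, Finset.mem_singleton]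
      tauto
    rw [heq, Finset.card_sdiff_of_subset (Finset.subset_univ _), Finset.card_univ, hcardV]
    have h3 : ({b₀, b₁, b₂} : Finset V).card = 3 := by
      rw [Finset.card_insert_of_notMem (by simp [hb01, hb02]),
        Finset.card_insert_of_notMem (by simp [hb12]), Finset.card_singleton]
    rw [h3]
  refine ⟨?_, ?_, ?_, hcard3, ?_⟩
  · intro b w
    rw [hA']
    split
    · right; rfl
    · exact hA _ _
  · -- row sums of A'
    intro b
    by_cases hbl : b.1 = bL
    · have hpt : ∀ w : {w : W // w ≠ w₀ ∧ w ≠ w₁ ∧ w ≠ w₂},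
          A' b w = A bL w.1 + (if w.1 = wR then 1 - A bL w.1 else 0) := by
        intro w
        by_cases hw : w.1 = wR
        · rw [hA', if_pos (Or.inl ⟨hbl, hw⟩), if_pos hw, hw]; ring
        · have hc : ¬((b.1 = bL ∧ w.1 = wR) ∨ (b.1 = bR ∧ w.1 = wL)) := by
            rintro (⟨_, h⟩ | ⟨h, _⟩)
            · exact hw h
            · exact hbLbR (hbl ▸ h)
          rw [hA', if_neg hc, if_neg hw, hbl]; ring
      have h1 : (∑ w : {w : W // w ≠ w₀ ∧ w ≠ w₁ ∧ w ≠ w₂}, A bL w.1)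
          = (∑ w, A bL w) - (A bL w₀ + A bL w₁ + A bL w₂) := hsubW (fun w => A bL w)
      have h2 : (∑ w : {w : W // w ≠ w₀ ∧ w ≠ w₁ ∧ w ≠ w₂},
          (if w.1 = wR then 1 - A bL w.1 else 0)) = 1 - A bL wR :=
        hiteW wR hwR0 hwR1 hwR2 (fun w => 1 - A bL w)
      rw [Finset.sum_congr rfl fun w _ => hpt w, Finset.sum_add_distrib, h1, h2,
        hArow bL, hbLe, cA1 bL hbL0 hbL1 hbL2, cA2 bL hbL1 hbL2 hbLbR, hALR]
      ring
    · by_cases hbr : b.1 = bR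
      · have hpt : ∀ w : {w : W // w ≠ w₀ ∧ w ≠ w₁ ∧ w ≠ w₂},
            A' b w = A bR w.1 + (if w.1 = wL then 1 - A bR w.1 else 0) := by
          intro w
          by_cases hw : w.1 = wL
          · rw [hA', if_pos (Or.inr ⟨hbr, hw⟩), if_pos hw, hw]; ring
          · have hc : ¬((b.1 = bL ∧ w.1 = wR) ∨ (b.1 = bR ∧ w.1 = wL)) := by
              rintro (⟨h, _⟩ | ⟨_, h⟩)
              · exact hbl h
              · exact hw h
            rw [hA', if_neg hc, if_neg hw, hbr]; ring
        have h1 : (∑ w : {w : W // w ≠ w₀ ∧ w ≠ w₁ ∧ w ≠ w₂}, A bR w.1)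
            = (∑ w, A bR w) - (A bR w₀ + A bR w₁ + A bR w₂) := hsubW (fun w => A bR w)
        have h2 : (∑ w : {w : W // w ≠ w₀ ∧ w ≠ w₁ ∧ w ≠ w₂},
            (if w.1 = wL then 1 - A bR w.1 else 0)) = 1 - A bR wL :=
          hiteW wL hwL0 hwL1 hwL2 (fun w => 1 - A bR w)
        rw [Finset.sum_congr rfl fun w _ => hpt w, Finset.sum_add_distrib, h1, h2,
          hArow bR, hbRe, cA0 bR hbR0 hbR1 (Ne.symm hbLbR), cA1 bR hbR0 hbR1 hbR2, hARL]
        ring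
      · have hpt : ∀ w : {w : W // w ≠ w₀ ∧ w ≠ w₁ ∧ w ≠ w₂},
            A' b w = A b.1 w.1 := by
          intro w
          have hc : ¬((b.1 = bL ∧ w.1 = wR) ∨ (b.1 = bR ∧ w.1 = wL)) := by
            rintro (⟨h, _⟩ | ⟨h, _⟩)
            · exact hbl h
            · exact hbr h
          rw [hA', if_neg hc]
        have h1 : (∑ w : {w : W // w ≠ w₀ ∧ w ≠ w₁ ∧ w ≠ w₂}, A b.1 w.1)
            = (∑ w, A b.1 w) - (A b.1 w₀ + A b.1 w₁ + A b.1 w₂) := hsubW (fun w => A b.1 w)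
        rw [Finset.sum_congr rfl fun w _ => hpt w, h1, hArow b.1,
          cA0 b.1 b.2.1 b.2.2.1 hbl, cA1 b.1 b.2.1 b.2.2.1 b.2.2.2,
          cA2 b.1 b.2.2.1 b.2.2.2 hbr]
        ring
  · -- column sums of A'
    intro w
    by_cases hwr : w.1 = wR
    · have hpt : ∀ b : {v : V // v ≠ b₀ ∧ v ≠ b₁ ∧ v ≠ b₂},
          A' b w = A b.1 w.1 + (if b.1 = bL then 1 - A b.1 w.1 else 0) := by
        intro b
        by_cases hb : b.1 = bL
        · rw [hA', if_pos (Or.inl ⟨hb, hwr⟩), if_pos hb, hb]; ring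
        · have hc : ¬((b.1 = bL ∧ w.1 = wR) ∨ (b.1 = bR ∧ w.1 = wL)) := by
            rintro (⟨h, _⟩ | ⟨_, h⟩)
            · exact hb h
            · exact hwLwR (hwr ▸ h).symm
          rw [hA', if_neg hc, if_neg hb]; ring
      have h1 : (∑ b : {v : V // v ≠ b₀ ∧ v ≠ b₁ ∧ v ≠ b₂}, A b.1 w.1)
          = (∑ v', A v' w.1) - (A b₀ w.1 + A b₁ w.1 + A b₂ w.1) := hsubV (fun v => A v w.1)
      have h2 : (∑ b : {v : V // v ≠ b₀ ∧ v ≠ b₁ ∧ v ≠ b₂},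
          (if b.1 = bL then 1 - A b.1 w.1 else 0)) = 1 - A bL w.1 :=
        hiteV bL hbL0 hbL1 hbL2 (fun v => 1 - A v w.1)
      rw [Finset.sum_congr rfl fun b _ => hpt b, Finset.sum_add_distrib, h1, h2, hwr,
        hAcol wR, rA0 wR hwR0 hwR1 (Ne.symm hwLwR),
        rA1 wR hwR0 hwR1 hwR2, hwRe, hALR]
      ring
    · by_cases hwl : w.1 = wL
      · have hpt : ∀ b : {v : V // v ≠ b₀ ∧ v ≠ b₁ ∧ v ≠ b₂},
            A' b w = A b.1 w.1 + (if b.1 = bR then 1 - A b.1 w.1 else 0) := by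
          intro b
          by_cases hb : b.1 = bR
          · rw [hA', if_pos (Or.inr ⟨hb, hwl⟩), if_pos hb, hb]; ring
          · have hc : ¬((b.1 = bL ∧ w.1 = wR) ∨ (b.1 = bR ∧ w.1 = wL)) := by
              rintro (⟨_, h⟩ | ⟨h, _⟩)
              · exact hwr h
              · exact hb h
            rw [hA', if_neg hc, if_neg hb]; ring
        have h1 : (∑ b : {v : V // v ≠ b₀ ∧ v ≠ b₁ ∧ v ≠ b₂}, A b.1 w.1)
            = (∑ v', A v' w.1) - (A b₀ w.1 + A b₁ w.1 + A b₂ w.1) := hsubV (fun v => A v w.1)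
        have h2 : (∑ b : {v : V // v ≠ b₀ ∧ v ≠ b₁ ∧ v ≠ b₂},
            (if b.1 = bR then 1 - A b.1 w.1 else 0)) = 1 - A bR w.1 :=
          hiteV bR hbR0 hbR1 hbR2 (fun v => 1 - A v w.1)
        rw [Finset.sum_congr rfl fun b _ => hpt b, Finset.sum_add_distrib, h1, h2, hwl,
          hAcol wL, hwLe, rA1 wL hwL0 hwL1 hwL2,
          rA2 wL hwL1 hwL2 hwLwR, hARL]
        ring
      · have hpt : ∀ b : {v : V // v ≠ b₀ ∧ v ≠ b₁ ∧ v ≠ b₂},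
            A' b w = A b.1 w.1 := by
          intro b
          have hc : ¬((b.1 = bL ∧ w.1 = wR) ∨ (b.1 = bR ∧ w.1 = wL)) := by
            rintro (⟨_, h⟩ | ⟨_, h⟩)
            · exact hwr h
            · exact hwl h
          rw [hA', if_neg hc]
        have h1 : (∑ b : {v : V // v ≠ b₀ ∧ v ≠ b₁ ∧ v ≠ b₂}, A b.1 w.1)
            = (∑ v', A v' w.1) - (A b₀ w.1 + A b₁ w.1 + A b₂ w.1) := hsubV (fun v => A v w.1)
        rw [Finset.sum_congr rfl fun b _ => hpt b, h1, hAcol w.1,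
          rA0 w.1 w.2.1 w.2.2.1 hwl, rA1 w.1 w.2.1 w.2.2.1 w.2.2.2,
          rA2 w.1 w.2.2.1 w.2.2.2 hwr]
        ring
  · -- the matrix B'
    refine ⟨fun v w => B v.1 w.1, fun v w => hB _ _, ?_, ?_, ?_⟩
    · intro v
      have e := E1 v.1
      rw [if_neg (fun h => v.2.2.1 h.symm)] at e
      have h1 : (∑ w : {w : W // w ≠ w₀ ∧ w ≠ w₁ ∧ w ≠ w₂}, B v.1 w.1)
          = (∑ w, B v.1 w) - (B v.1 w₀ + B v.1 w₁ + B v.1 w₂) := hsubW (fun w => B v.1 w)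
      rw [h1, hBrow v.1]
      omega
    · intro w
      have e := F1 w.1
      rw [if_neg w.2.2.1] at e
      have h1 : (∑ v : {v : V // v ≠ b₀ ∧ v ≠ b₁ ∧ v ≠ b₂}, B v.1 w.1)
          = (∑ v', B v' w.1) - (B b₀ w.1 + B b₁ w.1 + B b₂ w.1) := hsubV (fun v => B v w.1)
      rw [h1, hBcol w.1]
      omega
    · ext u v
      rw [Matrix.mul_apply]
      simp only [Matrix.transpose_apply, Matrix.add_apply, Matrix.of_apply,
        Matrix.smul_apply, Matrix.one_apply, smul_eq_mul, mul_ite, mul_one, mul_zero]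
      have hite : (if u = v then k else 0) = (if u.1 = v.1 then k else 0) := by
        by_cases h : u = v
        · rw [if_pos h, if_pos (congrArg Subtype.val h)]
        · rw [if_neg h, if_neg (fun h' => h (Subtype.ext h'))]
      rw [hite]
      show ∑ w', A' u w' * B v.1 w'.1 = _
      by_cases hbl : u.1 = bL
      · have hpt : ∀ w' : {w : W // w ≠ w₀ ∧ w ≠ w₁ ∧ w ≠ w₂},
            A' u w' * B v.1 w'.1
              = A bL w'.1 * B v.1 w'.1
                + (if w'.1 = wR then (1 - A bL w'.1) * B v.1 w'.1 else 0) := by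
          intro w'
          by_cases hw : w'.1 = wR
          · rw [hA', if_pos (Or.inl ⟨hbl, hw⟩), if_pos hw, hw]; ring
          · have hc : ¬((u.1 = bL ∧ w'.1 = wR) ∨ (u.1 = bR ∧ w'.1 = wL)) := by
              rintro (⟨_, h⟩ | ⟨h, _⟩)
              · exact hw h
              · exact hbLbR (hbl ▸ h)
            rw [hA', if_neg hc, if_neg hw, hbl]; ring
        have h1 : (∑ w' : {w : W // w ≠ w₀ ∧ w ≠ w₁ ∧ w ≠ w₂}, A bL w'.1 * B v.1 w'.1)
            = (∑ w', A bL w' * B v.1 w')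
              - (A bL w₀ * B v.1 w₀ + A bL w₁ * B v.1 w₁ + A bL w₂ * B v.1 w₂) :=
          hsubW (fun w => A bL w * B v.1 w)
        have h2 : (∑ w' : {w : W // w ≠ w₀ ∧ w ≠ w₁ ∧ w ≠ w₂},
            (if w'.1 = wR then (1 - A bL w'.1) * B v.1 w'.1 else 0))
              = (1 - A bL wR) * B v.1 wR :=
          hiteW wR hwR0 hwR1 hwR2 (fun w => (1 - A bL w) * B v.1 w)
        rw [Finset.sum_congr rfl fun w' _ => hpt w', Finset.sum_add_distrib, h1, h2,
          habs bL v.1, hbLe, hALR, cA1 bL hbL0 hbL1 hbL2, cA2 bL hbL1 hbL2 hbLbR, hbl,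
          Key1 v.1 v.2.2.1 v.2.2.2]
        ring
      · by_cases hbr : u.1 = bR
        · have hpt : ∀ w' : {w : W // w ≠ w₀ ∧ w ≠ w₁ ∧ w ≠ w₂},
              A' u w' * B v.1 w'.1
                = A bR w'.1 * B v.1 w'.1
                  + (if w'.1 = wL then (1 - A bR w'.1) * B v.1 w'.1 else 0) := by
            intro w'
            by_cases hw : w'.1 = wL
            · rw [hA', if_pos (Or.inr ⟨hbr, hw⟩), if_pos hw, hw]; ring
            · have hc : ¬((u.1 = bL ∧ w'.1 = wR) ∨ (u.1 = bR ∧ w'.1 = wL)) := by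
                rintro (⟨h, _⟩ | ⟨_, h⟩)
                · exact hbl h
                · exact hw h
              rw [hA', if_neg hc, if_neg hw, hbr]; ring
          have h1 : (∑ w' : {w : W // w ≠ w₀ ∧ w ≠ w₁ ∧ w ≠ w₂}, A bR w'.1 * B v.1 w'.1)
              = (∑ w', A bR w' * B v.1 w')
                - (A bR w₀ * B v.1 w₀ + A bR w₁ * B v.1 w₁ + A bR w₂ * B v.1 w₂) :=
            hsubW (fun w => A bR w * B v.1 w)
          have h2 : (∑ w' : {w : W // w ≠ w₀ ∧ w ≠ w₁ ∧ w ≠ w₂},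
              (if w'.1 = wL then (1 - A bR w'.1) * B v.1 w'.1 else 0))
                = (1 - A bR wL) * B v.1 wL :=
            hiteW wL hwL0 hwL1 hwL2 (fun w => (1 - A bR w) * B v.1 w)
          rw [Finset.sum_congr rfl fun w' _ => hpt w', Finset.sum_add_distrib, h1, h2,
            habs bR v.1, hbRe, hARL, cA0 bR hbR0 hbR1 (Ne.symm hbLbR),
            cA1 bR hbR0 hbR1 hbR2, hbr, Key2 v.1 v.2.1 v.2.2.1]
          ring
        · have hpt : ∀ w' : {w : W // w ≠ w₀ ∧ w ≠ w₁ ∧ w ≠ w₂},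
              A' u w' * B v.1 w'.1 = A u.1 w'.1 * B v.1 w'.1 := by
            intro w'
            have hc : ¬((u.1 = bL ∧ w'.1 = wR) ∨ (u.1 = bR ∧ w'.1 = wL)) := by
              rintro (⟨h, _⟩ | ⟨h, _⟩)
              · exact hbl h
              · exact hbr h
            rw [hA', if_neg hc]
          have h1 : (∑ w' : {w : W // w ≠ w₀ ∧ w ≠ w₁ ∧ w ≠ w₂}, A u.1 w'.1 * B v.1 w'.1)
              = (∑ w', A u.1 w' * B v.1 w')
                - (A u.1 w₀ * B v.1 w₀ + A u.1 w₁ * B v.1 w₁ + A u.1 w₂ * B v.1 w₂) :=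
            hsubW (fun w => A u.1 w * B v.1 w)
          rw [Finset.sum_congr rfl fun w' _ => hpt w', h1, habs u.1 v.1,
            cA0 u.1 u.2.1 u.2.2.1 hbl, cA1 u.1 u.2.1 u.2.2.1 u.2.2.2,
            cA2 u.1 u.2.2.1 u.2.2.2 hbr]
          ring
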